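/- Let K be a field of characteristic zero, let a0(x), a1(x), a2(x) ∈ K[x], and suppose there exists l ∈ K* such that a2(x) = l·a1(x) − l²·a0(x). Then for the K-derivation D = y∂x + (a2(x)y² + a1(x)y + a0(x))∂y of K[x,y], one has D(y + l⁻¹) = l·(a1(x)y − l·a0(x)y + a0(x))·(y + l⁻¹); in particular the principal ideal (y + l⁻¹) of K[x,y] is D-stable, and D is not simple. -/
import Mathlib


/-- A `K`-derivation `D` of `R` is *simple* if `R` has no `D`-stable ideal
other than `0` and `R`. -/
def Derivation.IsSimple {K R : Type*} [CommRing K] [CommRing R] [Algebra K R]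
    (D : Derivation K R R) : Prop :=
  ∀ I : Ideal R, (∀ a ∈ I, D a ∈ I) → I = ⊥ ∨ I = ⊤

theorem stmt_10 (K : Type*) [Field K] [CharZero K] (a0 a1 a2 : Polynomial K)
    (l : K) (hl : l ≠ 0)
    (ha2 : a2 = Polynomial.C l * a1 - Polynomial.C (l ^ 2) * a0)
    (D : Derivation K (MvPolynomial (Fin 2) K) (MvPolynomial (Fin 2) K))
    (hDx : D (MvPolynomial.X 0) = MvPolynomial.X 1)
    (hDy : D (MvPolynomial.X 1) =
      Polynomial.aeval (MvPolynomial.X 0) a2 * MvPolynomial.X 1 ^ 2 +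
        Polynomial.aeval (MvPolynomial.X 0) a1 * MvPolynomial.X 1 +
        Polynomial.aeval (MvPolynomial.X 0) a0) :
    D (MvPolynomial.X 1 + MvPolynomial.C l⁻¹) =
      MvPolynomial.C l *
        (Polynomial.aeval (MvPolynomial.X 0) a1 * MvPolynomial.X 1 -
          MvPolynomial.C l * Polynomial.aeval (MvPolynomial.X 0) a0 * MvPolynomial.X 1 +
          Polynomial.aeval (MvPolynomial.X 0) a0) *
        (MvPolynomial.X 1 + MvPolynomial.C l⁻¹) ∧
    (∀ a ∈ Ideal.span {MvPolynomial.X 1 + MvPolynomial.C l⁻¹},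
      D a ∈ Ideal.span {MvPolynomial.X 1 + MvPolynomial.C l⁻¹}) ∧
    ¬ D.IsSimple := by
  have hC : (D (MvPolynomial.C l⁻¹ : MvPolynomial (Fin 2) K)) = 0 := by
    have : (MvPolynomial.C l⁻¹ : MvPolynomial (Fin 2) K) =
        algebraMap K (MvPolynomial (Fin 2) K) l⁻¹ := rfl
    rw [this, Derivation.map_algebraMap]
  have key : D (MvPolynomial.X 1 + MvPolynomial.C l⁻¹) =
      MvPolynomial.C l *
        (Polynomial.aeval (MvPolynomial.X 0) a1 * MvPolynomial.X 1 -
          MvPolynomial.C l * Polynomial.aeval (MvPolynomial.X 0) a0 * MvPolynomial.X 1 +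
          Polynomial.aeval (MvPolynomial.X 0) a0) *
        (MvPolynomial.X 1 + MvPolynomial.C l⁻¹) := by
    rw [map_add, hC, add_zero, hDy, ha2]
    have h1 : (Polynomial.aeval (MvPolynomial.X 0 : MvPolynomial (Fin 2) K))
        (Polynomial.C l * a1 - Polynomial.C (l ^ 2) * a0) =
        MvPolynomial.C l * Polynomial.aeval (MvPolynomial.X 0) a1 -
        MvPolynomial.C (l ^ 2) * Polynomial.aeval (MvPolynomial.X 0) a0 := by
      simp [Polynomial.aeval_C, MvPolynomial.algebraMap_eq]
    rw [h1, map_pow]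
    have hli : (MvPolynomial.C l : MvPolynomial (Fin 2) K) * MvPolynomial.C l⁻¹ = 1 := by
      rw [← MvPolynomial.C_mul, mul_inv_cancel₀ hl, MvPolynomial.C_1]
    linear_combination (-(Polynomial.aeval (MvPolynomial.X 0)) a1 * MvPolynomial.X 1 +
      MvPolynomial.C l * (Polynomial.aeval (MvPolynomial.X 0)) a0 * MvPolynomial.X 1 -
      (Polynomial.aeval (MvPolynomial.X 0)) a0) * hli
  set p : MvPolynomial (Fin 2) K := MvPolynomial.X 1 + MvPolynomial.C l⁻¹ with hp
  have stable : ∀ a ∈ Ideal.span {p}, D a ∈ Ideal.span {p} := by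
    intro a ha
    rw [Ideal.mem_span_singleton] at ha ⊢
    obtain ⟨q, rfl⟩ := ha
    have hdp : p ∣ D p := ⟨MvPolynomial.C l *
        (Polynomial.aeval (MvPolynomial.X 0) a1 * MvPolynomial.X 1 -
          MvPolynomial.C l * Polynomial.aeval (MvPolynomial.X 0) a0 * MvPolynomial.X 1 +
          Polynomial.aeval (MvPolynomial.X 0) a0), by rw [key]; ring⟩
    rw [Derivation.leibniz, smul_eq_mul, smul_eq_mul]
    exact dvd_add (dvd_mul_right p (D q)) (hdp.mul_left q)
  refine ⟨key, stable, ?_⟩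
  intro hS
  rcases hS (Ideal.span {p}) stable with h | h
  · have : p = 0 := by
      have := Ideal.span_singleton_eq_bot.mp h
      exact this
    have := congrArg (MvPolynomial.eval (fun _ => (0 : K))) this
    simp [hp] at this
    exact hl this
  · have h1 : (1 : MvPolynomial (Fin 2) K) ∈ Ideal.span {p} := h ▸ Submodule.mem_top
    rw [Ideal.mem_span_singleton] at h1
    obtain ⟨q, hq⟩ := h1
    have := congrArg (MvPolynomial.eval (fun i => if i = 1 then -l⁻¹ else 0)) hq
    simp [hp] at this
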